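/- Let 𝕜 be a field of characteristic zero, let k ≥ 2, and set v₁ = (1,0), v₂ = (0,1), v₃ = (x₁,x₂) ∈ 𝕜². Suppose H₁, H₂, H₃ are k×(k+1) matrices over 𝕜 satisfying the square relations (k−1) • (H_i·F_k(v_j)) = k • (F_{k−1}(v_j)·G_k(v_i)) − F_{k−1}(v_i)·G_k(v_j) for all i, j ∈ {1,2,3}. Then H_i = G_{k+1}(v_i) for i = 1, 2, 3. (This is Step 2 of the induction step in the proof of Theorem 4.2: the square relations of Theorem 3.12 with the standard F- and G-matrices force the g-type matrices G_i^{(n−1)} at the corner vertex to take the standard form (4.2).) -/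

import Mathlib

/-- The `(k+1) × k` matrix `F_k(a,b)` of equation (4.1): (1-indexed) entry `(i,j)` is
`a` if `i = j`, `b` if `i = j+1`, and `0` otherwise. -/
def Fmat (R : Type*) [CommRing R] (k : ℕ) (a b : R) : Matrix (Fin (k + 1)) (Fin k) R :=
  Matrix.of fun i j =>
    if (i : ℕ) = (j : ℕ) then a else if (i : ℕ) = (j : ℕ) + 1 then b else 0

/-- The `(k−1) × k` matrix `G_k(a,b)` of equation (4.2): (1-indexed) entry `(i,i)` is
`−(k−i)·b`, entry `(i,i+1)` is `i·a`, other entries are `0`. -/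
def Gmat (R : Type*) [CommRing R] (k : ℕ) (a b : R) : Matrix (Fin (k - 1)) (Fin k) R :=
  Matrix.of fun i j =>
    if (j : ℕ) = (i : ℕ) then -((k - 1 - (i : ℕ) : ℕ) : R) * b
    else if (j : ℕ) = (i : ℕ) + 1 then (((i : ℕ) + 1 : ℕ) : R) * a
    else 0

section aux
variable {R : Type*} [AddCommMonoid R]

lemma sumOne {n : ℕ} (t : ℕ) (g : Fin n → R)
    (hg : ∀ m : Fin n, (m : ℕ) ≠ t → g m = 0) :
    ∑ m : Fin n, g m = if h : t < n then g ⟨t, h⟩ else 0 := by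
  split_ifs with h
  · exact Finset.sum_eq_single_of_mem ⟨t, h⟩ (Finset.mem_univ _)
      (fun b _ hb => hg b (fun hb' => hb (Fin.ext hb')))
  · exact Finset.sum_eq_zero fun m _ => hg m fun hm => h (hm ▸ m.isLt)

lemma sumTwo {n : ℕ} (t₁ t₂ : ℕ) (ht : t₁ ≠ t₂) (g : Fin n → R)
    (hg : ∀ m : Fin n, (m : ℕ) ≠ t₁ → (m : ℕ) ≠ t₂ → g m = 0) :
    ∑ m : Fin n, g m =
      (if h : t₁ < n then g ⟨t₁, h⟩ else 0) + (if h : t₂ < n then g ⟨t₂, h⟩ else 0) := by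
  have key : ∀ m : Fin n, g m =
      (if (m:ℕ) = t₁ then g m else 0) + (if (m:ℕ) = t₂ then g m else 0) := by
    intro m
    by_cases h1 : (m:ℕ) = t₁
    · rw [if_pos h1, if_neg (by omega), add_zero]
    · by_cases h2 : (m:ℕ) = t₂
      · rw [if_neg h1, if_pos h2, zero_add]
      · rw [if_neg h1, if_neg h2, add_zero]; exact hg m h1 h2
  calc ∑ m, g m
      = ∑ m : Fin n, ((if (m:ℕ) = t₁ then g m else 0) + (if (m:ℕ) = t₂ then g m else 0)) :=
        Finset.sum_congr rfl fun m _ => key m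
    _ = _ := by
        rw [Finset.sum_add_distrib, sumOne t₁ _ (fun m hm => if_neg hm),
          sumOne t₂ _ (fun m hm => if_neg hm)]
        congr 1 <;> split_ifs <;> first | rfl | simp_all

end aux

lemma key {𝕜 : Type*} [Field 𝕜] (k : ℕ) (hk : 2 ≤ k) (a b c d : 𝕜) :
    (k - 1) • ((Gmat 𝕜 (k + 1) a b).submatrix (Fin.cast (Nat.add_sub_cancel k 1).symm) id
        * Fmat 𝕜 k c d) =
      (k • (Fmat 𝕜 (k - 1) c d * Gmat 𝕜 k a b)
          - Fmat 𝕜 (k - 1) a b * Gmat 𝕜 k c d).submatrix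
        (Fin.cast (Nat.sub_add_cancel (by omega : 1 ≤ k)).symm) id := by
  ext p q
  have hq := q.isLt
  have hp := p.isLt
  have e1 : ((k + 1 - 1 - (p:ℕ) : ℕ) : 𝕜) = (k:𝕜) - (p:ℕ) := by
    rw [show k + 1 - 1 - (p:ℕ) = k - (p:ℕ) from by omega, Nat.cast_sub (by omega)]
  have e2 : ((k - 1 - (p:ℕ) : ℕ) : 𝕜) = (k:𝕜) - 1 - (p:ℕ) := by
    rw [show k - 1 - (p:ℕ) = k - ((p:ℕ) + 1) from by omega, Nat.cast_sub (by omega)]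
    push_cast; ring
  have e4 : ((k - 1 : ℕ) : 𝕜) = (k:𝕜) - 1 := by
    rw [Nat.cast_sub (by omega), Nat.cast_one]
  simp only [Matrix.smul_apply, Matrix.submatrix_apply, Matrix.sub_apply, Matrix.mul_apply,
    id_eq, nsmul_eq_mul]
  rw [sumTwo (q:ℕ) ((q:ℕ)+1) (by omega) _ (fun m h1 h2 => by
    simp only [Fmat, Matrix.of_apply]
    rw [if_neg (by omega), if_neg (by omega), mul_zero])]
  rw [dif_pos (by omega), dif_pos (by omega)]
  by_cases hp0 : (p:ℕ) = 0
  · rw [sumOne (p:ℕ) _ (fun m h1 => by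
      simp only [Fmat, Matrix.of_apply, Fin.coe_cast]
      rw [if_neg (by omega), if_neg (by omega), zero_mul])]
    rw [sumOne (p:ℕ) _ (fun m h1 => by
      simp only [Fmat, Matrix.of_apply, Fin.coe_cast]
      rw [if_neg (by omega), if_neg (by omega), zero_mul])]
    rw [dif_pos (by omega), dif_pos (by omega)]
    have ep0 : ((p:ℕ):𝕜) = 0 := by rw [hp0]; norm_num
    simp only [Fmat, Gmat, Matrix.of_apply, Fin.coe_cast, if_true, ite_true]
    simp only [e1, e2, e4]
    push_cast
    simp only [ep0]
    split_ifs <;> first | omega | ring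
  · rw [sumTwo (p:ℕ) ((p:ℕ)-1) (by omega) _ (fun m h1 h2 => by
      simp only [Fmat, Matrix.of_apply, Fin.coe_cast]
      rw [if_neg (by omega), if_neg (by omega), zero_mul])]
    rw [sumTwo (p:ℕ) ((p:ℕ)-1) (by omega) _ (fun m h1 h2 => by
      simp only [Fmat, Matrix.of_apply, Fin.coe_cast]
      rw [if_neg (by omega), if_neg (by omega), zero_mul])]
    simp only [dif_pos (show (p:ℕ)-1 < k-1 from by omega)]
    have e3 : ((k - 1 - ((p:ℕ) - 1) : ℕ) : 𝕜) = (k:𝕜) - (p:ℕ) := by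
      rw [show k - 1 - ((p:ℕ) - 1) = k - (p:ℕ) from by omega, Nat.cast_sub (by omega)]
    simp only [Fmat, Gmat, Matrix.of_apply, Fin.coe_cast, if_true, ite_true]
    rw [show (p:ℕ) - 1 + 1 = (p:ℕ) from by omega]
    simp only [e1, e2, e3, e4]
    push_cast
    by_cases hpk : (p:ℕ) < k - 1
    · rw [dif_pos hpk, dif_pos hpk]
      split_ifs <;> first | omega | ring
    · rw [dif_neg hpk, dif_neg hpk]
      have hpe : ((p:ℕ):𝕜) = (k:𝕜) - 1 := by
        rw [show (p:ℕ) = k - 1 from by omega, e4]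
      simp only [hpe]
      split_ifs <;> first | omega | ring

lemma cols {𝕜 : Type*} [Field 𝕜] (k : ℕ) (hk : 1 ≤ k) (M : Matrix (Fin k) (Fin (k + 1)) 𝕜)
    (h0 : M * Fmat 𝕜 k 1 0 = 0) (h1 : M * Fmat 𝕜 k 0 1 = 0) : M = 0 := by
  ext p q
  rcases lt_or_ge (q : ℕ) k with hq | hq
  · have h := congrFun (congrFun h0 p) ⟨q, hq⟩
    rw [Matrix.mul_apply] at h
    have hj : ((⟨(q:ℕ), hq⟩ : Fin k) : ℕ) = (q : ℕ) := rfl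
    rw [sumOne (q:ℕ) _ (fun m hm => by
      simp only [Fmat, Matrix.of_apply, Fin.val_mk]
      rw [if_neg (by omega)]
      split_ifs <;> ring)] at h
    rw [dif_pos (by omega)] at h
    simp only [Fmat, Matrix.of_apply, Pi.zero_apply, Matrix.zero_apply, Fin.val_mk, if_true,
      mul_one] at h
    have : (⟨(q:ℕ), by omega⟩ : Fin (k+1)) = q := Fin.ext rfl
    rw [this] at h
    simpa using h
  · have hqk : (q : ℕ) = k := by omega
    have h := congrFun (congrFun h1 p) ⟨k - 1, by omega⟩
    have hj : ((⟨k - 1, by omega⟩ : Fin k) : ℕ) = k - 1 := rfl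
    rw [Matrix.mul_apply] at h
    rw [sumOne k _ (fun m hm => by
      simp only [Fmat, Matrix.of_apply, Fin.val_mk]
      split_ifs <;> [ring; omega; ring])] at h
    rw [dif_pos (by omega)] at h
    simp only [Fmat, Matrix.of_apply, Pi.zero_apply, Matrix.zero_apply, Fin.val_mk] at h
    rw [if_neg (by omega), if_pos (by omega), mul_one] at h
    have : (⟨k, by omega⟩ : Fin (k+1)) = q := Fin.ext (by simp [hqk])
    rw [this] at h
    simpa using h

lemma cancel {𝕜 : Type*} [Field 𝕜] [CharZero 𝕜] {m n : ℕ} (t : ℕ) (ht : t ≠ 0)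
    (A : Matrix (Fin m) (Fin n) 𝕜) (h : t • A = 0) : A = 0 := by
  ext p q
  have h1 := congrFun (congrFun h p) q
  have h2 : (t : 𝕜) * A p q = 0 := by
    simpa [Matrix.smul_apply, nsmul_eq_mul] using h1
  rcases mul_eq_zero.mp h2 with h3 | h3
  · exact absurd (Nat.cast_injective (h3.trans Nat.cast_zero.symm)) ht
  · exact h3


/-- Step 2 of the induction step in the proof of Theorem 4.2: if `v₁ = (1,0)`, `v₂ = (0,1)`,
`v₃ = (x₁,x₂)` and `k × (k+1)` matrices `H₁, H₂, H₃` satisfy the square relations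
`(k−1) • (H_i·F_k(v_j)) = k • (F_{k−1}(v_j)·G_k(v_i)) − F_{k−1}(v_i)·G_k(v_j)` for all
`i, j ∈ {1,2,3}`, then `H_i = G_{k+1}(v_i)` for `i = 1,2,3`. -/
theorem stmt8 {𝕜 : Type*} [Field 𝕜] [CharZero 𝕜] (k : ℕ) (hk : 2 ≤ k) (x₁ x₂ : 𝕜)
    (v : Fin 3 → 𝕜 × 𝕜)
    (hv1 : v 0 = (1, 0)) (hv2 : v 1 = (0, 1)) (hv3 : v 2 = (x₁, x₂))
    (H : Fin 3 → Matrix (Fin k) (Fin (k + 1)) 𝕜)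
    (hrel : ∀ i j : Fin 3,
      (k - 1) • (H i * Fmat 𝕜 k (v j).1 (v j).2) =
        (k • (Fmat 𝕜 (k - 1) (v j).1 (v j).2 * Gmat 𝕜 k (v i).1 (v i).2)
            - Fmat 𝕜 (k - 1) (v i).1 (v i).2 * Gmat 𝕜 k (v j).1 (v j).2).submatrix
          (Fin.cast (by omega : k = k - 1 + 1)) id) :
    ∀ i : Fin 3,
      H i = (Gmat 𝕜 (k + 1) (v i).1 (v i).2).submatrix
        (Fin.cast (by omega : k = k + 1 - 1)) id := by
  intro i
  set G' : Matrix (Fin k) (Fin (k + 1)) 𝕜 :=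
    (Gmat 𝕜 (k + 1) (v i).1 (v i).2).submatrix (Fin.cast (by omega : k = k + 1 - 1)) id with hG'
  have step : ∀ j : Fin 3, (k - 1) • ((H i - G') * Fmat 𝕜 k (v j).1 (v j).2) = 0 := by
    intro j
    rw [Matrix.sub_mul, smul_sub, hrel i j, hG', key k hk (v i).1 (v i).2 (v j).1 (v j).2,
      sub_self]
  have hz : H i - G' = 0 := by
    apply cols k (by omega)
    · have h0 := cancel (k - 1) (by omega) _ (step 0)
      rw [hv1] at h0
      exact h0
    · have h1 := cancel (k - 1) (by omega) _ (step 1)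
      rw [hv2] at h1
      exact h1
  rw [sub_eq_zero] at hz
  exact hz
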